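/- arXiv:1503.07632 — 2 statements merged into one kernel-verified Lean document; each statement's English description precedes it below -/
import Mathlib

section
/- For ρ > 0, n ∈ ℕ₀ and x ∈ (-1,1], the left-sided Riemann–Liouville fractional derivative of the generalized Jacobi function satisfies ᴿD₋^ρ { (1+x)^ρ P_n^{(-ρ,ρ)}(x) } = [Γ(n+ρ+1)/n!] P_n(x), where P_n is the Legendre polynomial. -/
open Real Filter Set

/-- Left-sided Riemann–Liouville fractional integral of order `ρ` with base point `a`. -/
noncomputable def fracInt (a ρ : ℝ) (u : ℝ → ℝ) (x : ℝ) : ℝ :=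
  (1 / Real.Gamma ρ) * ∫ y in a..x, u y * (x - y) ^ (ρ - 1)

/-- Left-sided Caputo fractional derivative of order `μ ∈ (k-1,k)` with base point `a`. -/
noncomputable def caputoD (k : ℕ) (μ a : ℝ) (u : ℝ → ℝ) : ℝ → ℝ :=
  fracInt a ((k : ℝ) - μ) (iteratedDeriv k u)

/-- Left-sided Riemann–Liouville fractional derivative of order `μ ∈ (k-1,k)` with base point `a`. -/
noncomputable def rlD (k : ℕ) (μ a : ℝ) (u : ℝ → ℝ) : ℝ → ℝ :=
  iteratedDeriv k (fracInt a ((k : ℝ) - μ) u)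

/-- Jacobi polynomial `P_n^{(α,β)}` for general real parameters, via the terminating
hypergeometric representation. -/
noncomputable def jacobiP (n : ℕ) (α β : ℝ) (x : ℝ) : ℝ :=
  (1 / (n.factorial : ℝ)) * ∑ m ∈ Finset.range (n + 1),
    (n.choose m : ℝ) * (∏ i ∈ Finset.range (n - m), (α + m + 1 + i)) *
    (∏ i ∈ Finset.range m, (α + β + n + 1 + i)) * ((x - 1) / 2) ^ m

/-- Legendre polynomial. -/
noncomputable def legendreP (n : ℕ) (x : ℝ) : ℝ := jacobiP n 0 0 x


open Finset intervalIntegral MeasureTheory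


lemma vand (N : ℕ) : ∀ a c : ℝ, ∑ i ∈ range (N+1),
    (-1:ℝ)^i * (N.choose i) * (∏ t ∈ range i, (a+t)) * (∏ t ∈ range (N-i), (c+i+t))
    = ∏ t ∈ range N, (c - a + t) := by
  induction N with
  | zero => intro a c; simp
  | succ N ih =>
    intro a c
    set Pa : ℕ → ℝ := fun i => ∏ t ∈ range i, (a+(t:ℝ)) with hPa
    set Q : ℕ → ℝ := fun i => ∏ t ∈ range (N-i), (c+1+(i:ℝ)+t) with hQ
    set g : ℕ → ℝ := fun m => (-1:ℝ)^m * (N.choose m) * Pa m * ∏ t ∈ range (N+1-m), (c+(m:ℝ)+t) with hg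
    have hgsplit : ∀ i ∈ range (N+1), g i = (-1:ℝ)^i * (N.choose i) * Pa i * ((c+i) * Q i) := by
      intro i hi
      have hiN : i ≤ N := Nat.lt_succ_iff.mp (mem_range.mp hi)
      have h1 : N + 1 - i = (N - i) + 1 := by omega
      rw [hg]
      simp only [h1, Finset.prod_range_succ']
      rw [hQ]
      simp only [Nat.cast_zero, add_zero]
      have : ∏ t ∈ range (N-i), (c+(i:ℝ)+((t:ℕ)+1:ℕ)) = ∏ t ∈ range (N-i), (c+1+(i:ℝ)+t) :=
        Finset.prod_congr rfl (fun t _ => by push_cast; ring)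
      rw [this]; ring
    have key : ∑ i ∈ range (N+1+1),
        (-1:ℝ)^i * ((N+1).choose i) * (∏ t ∈ range i, (a+t)) * (∏ t ∈ range (N+1-i), (c+i+t))
        = (c - a) * ∑ i ∈ range (N+1),
          (-1:ℝ)^i * (N.choose i) * (∏ t ∈ range i, (a+t)) * (∏ t ∈ range (N-i), ((c+1)+i+t)) := by
      rw [Finset.sum_range_succ']
      have hterm : ∀ i ∈ range (N+1),
          (-1:ℝ)^(i+1) * ((N+1).choose (i+1)) * (∏ t ∈ range (i+1), (a+t)) *
            (∏ t ∈ range (N+1-(i+1)), (c+((i:ℕ)+1:ℕ)+t))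
          = (-(-1:ℝ)^i * (N.choose i) * Pa i * ((a+i) * Q i)) + g (i+1) := by
        intro i hi
        have h2 : N + 1 - (i + 1) = N - i := by omega
        have hch : (((N+1).choose (i+1) : ℕ) : ℝ) = (N.choose i : ℝ) + (N.choose (i+1) : ℝ) := by
          rw [Nat.choose_succ_succ]; push_cast; ring
        have hprodQ : ∏ t ∈ range (N-i), (c+((i:ℕ)+1:ℕ)+(t:ℝ)) = Q i :=
          Finset.prod_congr rfl (fun t _ => by push_cast; ring)
        have hPas : Pa (i+1) = Pa i * (a + i) := by rw [hPa]; exact Finset.prod_range_succ _ _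
        have hgi : g (i+1) = (-1:ℝ)^(i+1) * (N.choose (i+1)) * (Pa i * (a+i)) * Q i := by
          rw [hg]; simp only [h2]; rw [hprodQ, hPas]
        rw [h2, hprodQ, hch, hgi, hPa]
        rw [Finset.prod_range_succ]
        push_cast
        ring
      have hsg : ∑ i ∈ range (N+1), g (i+1)
          = (∑ i ∈ range (N+1), g i) + g (N+1) - g 0 := by
        have h1 := Finset.sum_range_succ' g (N+1)
        have h2 := Finset.sum_range_succ g (N+1)
        rw [h2] at h1
        linarith
      have hgN1 : g (N+1) = 0 := by
        rw [hg]; simp [Nat.choose_succ_self]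
      have hg0 : g 0 = ∏ t ∈ range (N+1), (c+((0:ℕ):ℝ)+t) := by
        rw [hg]; simp [hPa]
      rw [Finset.sum_congr rfl hterm, Finset.sum_add_distrib, hsg, hgN1, hg0,
        Finset.sum_congr rfl hgsplit]
      simp only [Nat.cast_zero, add_zero, pow_zero, Nat.choose_zero_right, Nat.cast_one,
        Finset.prod_range_zero, one_mul, Nat.sub_zero, mul_one]
      have hcollapse : ∀ (u v p : ℝ), u + (v - p) + p = u + v := by intros; ring
      rw [hcollapse, ← Finset.sum_add_distrib, Finset.mul_sum]
      refine Finset.sum_congr rfl (fun i _ => ?_)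
      simp only [hPa, hQ]
      ring
    rw [key, ih a (c+1), Finset.prod_range_succ']
    simp only [Nat.cast_zero, add_zero, Nat.cast_add, Nat.cast_one]
    rw [mul_comm]
    congr 1
    exact Finset.prod_congr rfl (fun t _ => by push_cast; ring)

lemma prod_reflect_neg (N : ℕ) (s : ℝ) :
    ∏ t ∈ range N, ((t:ℝ) - s - N) = (-1:ℝ)^N * ∏ t ∈ range N, (s + 1 + t) := by
  have h1 : ∏ t ∈ range N, ((t:ℝ) - s - N) = ∏ t ∈ range N, (-1) * (s + (N:ℝ) - t) :=
    Finset.prod_congr rfl fun t _ => by ring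
  rw [h1, Finset.prod_mul_distrib, Finset.prod_const, Finset.card_range]
  congr 1
  rw [← Finset.prod_range_reflect (fun t => s + 1 + (t:ℝ)) N]
  refine Finset.prod_congr rfl fun t ht => ?_
  have ht' : t < N := mem_range.mp ht
  have hc : ((N - 1 - t : ℕ) : ℝ) = (N:ℝ) - 1 - t := by
    have h : N - 1 - t = N - (1 + t) := by omega
    rw [h, Nat.cast_sub (by omega)]; push_cast; ring
  simp only [hc]; ring

lemma jacobi_flip (n : ℕ) (α β : ℝ) (x : ℝ) :
    jacobiP n α β x = (1 / (n.factorial : ℝ)) * ∑ j ∈ Finset.range (n + 1),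
      (-1:ℝ)^(n-j) * (n.choose j) * (∏ t ∈ Finset.range (n - j), (β + j + 1 + t)) *
      (∏ t ∈ Finset.range j, (α + β + n + 1 + t)) * ((x + 1) / 2) ^ j := by
  unfold jacobiP
  congr 1
  have hw : (x - 1) / 2 = (x + 1) / 2 + (-1) := by ring
  set w : ℝ := (x + 1) / 2 with hwdef
  set F : ℕ → ℕ → ℝ := fun m j => (n.choose m : ℝ) * (∏ i ∈ range (n - m), (α + m + 1 + i)) *
      (∏ i ∈ range m, (α + β + n + 1 + i)) * (w ^ j * (-1:ℝ)^(m-j) * (m.choose j)) with hF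
  have step1 : ∑ m ∈ range (n + 1),
      (n.choose m : ℝ) * (∏ i ∈ range (n - m), (α + m + 1 + i)) *
        (∏ i ∈ range m, (α + β + n + 1 + i)) * ((x - 1) / 2) ^ m
      = ∑ m ∈ range (n + 1), ∑ j ∈ range (n + 1), F m j := by
    refine Finset.sum_congr rfl fun m hm => ?_
    rw [hw, add_pow, Finset.mul_sum]
    refine Finset.sum_subset (Finset.range_subset_range.mpr ?_) (fun j _ hj => ?_)
    · have := mem_range.mp hm; omega
    · have hmj : m < j := by
        by_contra h
        exact hj (mem_range.mpr (by omega))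
      simp [hF, Nat.choose_eq_zero_of_lt hmj]
  rw [step1, Finset.sum_comm]
  refine Finset.sum_congr rfl fun j hj => ?_
  have hjn : j ≤ n := Nat.lt_succ_iff.mp (mem_range.mp hj)
  set N : ℕ := n - j with hN
  -- restrict to m ≥ j and reindex
  have step2 : ∑ m ∈ range (n + 1), F m j = ∑ i ∈ range (N + 1), F (j + i) j := by
    have hN1 : N + 1 = n + 1 - j := by omega
    calc ∑ m ∈ range (n+1), F m j
        = ∑ m ∈ Finset.Ico j (n+1), F m j := by
          refine (Finset.sum_subset (fun m hm => mem_range.mpr (Finset.mem_Ico.mp hm).2)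
            (fun m hm' hm => ?_)).symm
          have hmj : m < j := by
            have h1 : m < n + 1 := mem_range.mp hm'
            by_contra h
            exact hm (Finset.mem_Ico.mpr (by omega))
          simp [hF, Nat.choose_eq_zero_of_lt hmj]
      _ = ∑ i ∈ range (n + 1 - j), F (j + i) j := Finset.sum_Ico_eq_sum_range _ _ _
      _ = ∑ i ∈ range (N + 1), F (j + i) j := by rw [hN1]
  have step3 : ∀ i ∈ range (N + 1), F (j + i) j
      = ((n.choose j : ℝ) * (∏ t ∈ range j, (α + β + n + 1 + t)) * w ^ j) *
        ((-1:ℝ)^i * ((N.choose i : ℝ)) * (∏ t ∈ range i, ((α + β + n + 1 + j) + t)) *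
          (∏ t ∈ range (N - i), ((α + j + 1) + i + t))) := by
    intro i hi
    have hiN : i ≤ N := Nat.lt_succ_iff.mp (mem_range.mp hi)
    have hsub : n - (j + i) = N - i := by omega
    have hsub2 : j + i - j = i := by omega
    have hchoose : ((n.choose (j+i) : ℕ) : ℝ) * ((j+i).choose j : ℕ) = (n.choose j : ℝ) * (N.choose i : ℕ) := by
      have := Nat.choose_mul (n := n) (show j ≤ j + i by omega)
      rw [hsub2] at this
      rw [← Nat.cast_mul, this, hN]
      push_cast; ring
    have hprodA : ∏ t ∈ range (N - i), (α + ((j+i:ℕ):ℝ) + 1 + t)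
        = ∏ t ∈ range (N - i), ((α + j + 1) + i + t) :=
      Finset.prod_congr rfl fun t _ => by push_cast; ring
    have hprodB : ∏ t ∈ range (j + i), (α + β + (n:ℝ) + 1 + t)
        = (∏ t ∈ range j, (α + β + (n:ℝ) + 1 + t)) * ∏ t ∈ range i, ((α + β + n + 1 + j) + t) := by
      rw [Finset.prod_range_add]
      congr 1
      exact Finset.prod_congr rfl fun t _ => by push_cast; ring
    rw [hF]
    simp only [hsub, hsub2]
    rw [hprodA, hprodB]
    linear_combination ((∏ t ∈ range (N - i), ((α + j + 1) + i + t)) *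
      (∏ t ∈ range j, (α + β + (n:ℝ) + 1 + t)) *
      (∏ t ∈ range i, ((α + β + n + 1 + j) + t)) * w ^ j * (-1:ℝ)^i) * hchoose
  rw [step2, Finset.sum_congr rfl step3, ← Finset.mul_sum,
    vand N (α + β + (n:ℝ) + 1 + (j:ℝ)) (α + (j:ℝ) + 1)]
  have hn' : (n:ℝ) = (j:ℝ) + (N:ℝ) := by
    have : n = j + N := by omega
    rw [this]; push_cast; ring
  have hc : ∏ t ∈ range N, ((α + (j:ℝ) + 1) - (α + β + (n:ℝ) + 1 + (j:ℝ)) + (t:ℝ))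
      = ∏ t ∈ range N, ((t:ℝ) - (β + (j:ℝ)) - (N:ℝ)) :=
    Finset.prod_congr rfl fun t _ => by rw [hn']; ring
  rw [hc, prod_reflect_neg N (β + (j:ℝ))]
  ring


lemma real_beta {a b : ℝ} (ha : 0 < a) (hb : 0 < b) :
    ∫ t in (0:ℝ)..1, t ^ (a-1) * (1-t) ^ (b-1) = Real.Gamma a * Real.Gamma b / Real.Gamma (a+b) := by
  have h := Complex.Gamma_mul_Gamma_eq_betaIntegral (s := (a:ℂ)) (t := (b:ℂ))
    (by simpa using ha) (by simpa using hb)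
  have hofreal : Complex.betaIntegral a b
      = ((∫ t in (0:ℝ)..1, t ^ (a-1) * (1-t) ^ (b-1) : ℝ) : ℂ) := by
    rw [Complex.betaIntegral, ← intervalIntegral.integral_ofReal]
    refine intervalIntegral.integral_congr fun t ht => ?_
    rw [Set.uIcc_of_le (by norm_num : (0:ℝ) ≤ 1)] at ht
    obtain ⟨ht0, ht1⟩ := ht
    rw [Complex.ofReal_mul, Complex.ofReal_cpow ht0, Complex.ofReal_cpow (by linarith : (0:ℝ) ≤ 1 - t)]
    push_cast
    ring
  rw [hofreal, Complex.Gamma_ofReal, Complex.Gamma_ofReal, ← Complex.ofReal_add,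
    Complex.Gamma_ofReal, ← Complex.ofReal_mul, ← Complex.ofReal_mul] at h
  have h2 : Real.Gamma a * Real.Gamma b
      = Real.Gamma (a+b) * ∫ t in (0:ℝ)..1, t ^ (a-1) * (1-t) ^ (b-1) :=
    Complex.ofReal_injective h
  have h3 : Real.Gamma (a+b) ≠ 0 := (Real.Gamma_pos_of_pos (by linarith)).ne'
  field_simp [h3] at h2 ⊢
  linarith [h2]

lemma beta_shift {x s σ : ℝ} (hx : -1 < x) (hs : 0 ≤ s) (hσ : 0 < σ) :
    ∫ y in (-1:ℝ)..x, (1+y) ^ s * (x - y) ^ (σ-1)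
      = Real.Gamma (s+1) * Real.Gamma σ / Real.Gamma (s+σ+1) * (1+x) ^ (s+σ) := by
  set c : ℝ := 1 + x with hc
  have hc0 : 0 < c := by simp [hc]; linarith
  set g : ℝ → ℝ := fun y => (1+y) ^ s * (x - y) ^ (σ-1) with hg
  have claimA : ∫ y in (-1:ℝ)..x, g y = c • ∫ t in (0:ℝ)..1, g (c*t - 1) := by
    have h1 : (∫ t in (0:ℝ)..1, g (c * t - 1))
        = c⁻¹ • ∫ u in (c*0)..(c*1), g (u - 1) :=
      intervalIntegral.integral_comp_mul_left (fun u => g (u - 1)) hc0.ne'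
    simp only [mul_zero, mul_one] at h1
    have h2 : ∫ u in (0:ℝ)..c, g (u - 1) = ∫ y in (0-1:ℝ)..(c-1), g y :=
      intervalIntegral.integral_comp_sub_right _ 1
    have h3 : (0:ℝ)-1 = -1 := by norm_num
    have h4 : c - 1 = x := by rw [hc]; ring
    rw [h3, h4] at h2
    have : ∫ t in (0:ℝ)..1, g (c*t - 1) = c⁻¹ • ∫ y in (-1:ℝ)..x, g y := by
      rw [← h2]; exact h1
    rw [this, smul_smul, mul_inv_cancel₀ hc0.ne', one_smul]
  have claimB : ∫ t in (0:ℝ)..1, g (c*t - 1)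
      = c ^ (s+σ-1) * ∫ t in (0:ℝ)..1, t ^ ((s+1)-1) * (1-t) ^ (σ-1) := by
    rw [← intervalIntegral.integral_const_mul]
    refine intervalIntegral.integral_congr fun t ht => ?_
    rw [Set.uIcc_of_le (by norm_num : (0:ℝ) ≤ 1)] at ht
    obtain ⟨ht0, ht1⟩ := ht
    have e1 : 1 + (c*t - 1) = c * t := by ring
    have e2 : x - (c*t - 1) = c * (1 - t) := by rw [hc]; ring
    rw [hg]
    simp only [e1, e2]
    rw [Real.mul_rpow hc0.le ht0, Real.mul_rpow hc0.le (by linarith),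
      show (s+1)-1 = s by ring]
    rw [show c ^ (s+σ-1) = c ^ s * c ^ (σ-1) by rw [← Real.rpow_add hc0]; ring_nf]
    ring
  rw [claimA, claimB, real_beta (by linarith) hσ, smul_eq_mul]
  rw [show s + 1 + σ = s + σ + 1 by ring]
  rw [show c * (c ^ (s+σ-1) * (Real.Gamma (s+1) * Real.Gamma σ / Real.Gamma (s+σ+1)))
      = (c * c ^ (s+σ-1)) * (Real.Gamma (s+1) * Real.Gamma σ / Real.Gamma (s+σ+1)) by ring]
  rw [show c * c ^ (s+σ-1) = c ^ (s+σ) by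
    nth_rewrite 1 [← Real.rpow_one c]
    rw [← Real.rpow_add hc0]; ring_nf]
  ring

lemma gamma_prod {s : ℝ} (hs : 0 < s) (m : ℕ) :
    Real.Gamma s * ∏ t ∈ range m, (s + t) = Real.Gamma (s + m) := by
  induction m with
  | zero => simp
  | succ m ih =>
    rw [Finset.prod_range_succ, ← mul_assoc, ih,
      show s + ((m:ℕ)+1:ℕ) = (s + m) + 1 by push_cast; ring,
      Real.Gamma_add_one (by positivity)]
    ring

lemma fact_prod (j : ℕ) (m : ℕ) :
    (j.factorial : ℝ) * ∏ t ∈ range m, ((j:ℝ) + 1 + t) = ((j+m).factorial : ℝ) := by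
  induction m with
  | zero => simp
  | succ m ih =>
    rw [Finset.prod_range_succ, ← mul_assoc, ih,
      show j + (m+1) = (j+m) + 1 by omega, Nat.factorial_succ]
    push_cast; ring

lemma integrable_term {x σ s : ℝ} (hx : -1 < x) (hσ : 0 < σ) (hs : 0 ≤ s) :
    IntervalIntegrable (fun y => (1+y)^s * (x-y)^(σ-1)) volume (-1) x := by
  have h0 : IntervalIntegrable (fun u : ℝ => u^(σ-1)) volume (x+1) 0 :=
    intervalIntegral.intervalIntegrable_rpow' (by linarith)
  have h1 := h0.comp_sub_left x
  have h2 : x - (x+1) = -1 := by ring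
  rw [h2, sub_zero] at h1
  have hcont : ContinuousOn (fun y : ℝ => (1+y)^s) (Set.uIcc (-1) x) :=
    ((continuous_const.add continuous_id).rpow_const (fun y => Or.inr hs)).continuousOn
  exact h1.continuousOn_mul hcont

lemma iter_deriv_poly (k : ℕ) : ∀ (n : ℕ) (c : ℕ → ℝ),
    iteratedDeriv k (fun x : ℝ => ∑ j ∈ range (n+1), c j * (1+x)^(j+k))
    = fun x => ∑ j ∈ range (n+1), c j * ((j+k).factorial / (j.factorial : ℝ)) * (1+x)^j := by
  induction k with
  | zero =>
    intro n c
    funext x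
    simp only [iteratedDeriv_zero, Nat.add_zero]
    refine Finset.sum_congr rfl fun j _ => ?_
    rw [div_self (by exact_mod_cast j.factorial_ne_zero)]
    ring
  | succ k ih =>
    intro n c
    rw [iteratedDeriv_succ']
    have hderiv : (deriv fun x : ℝ => ∑ j ∈ range (n+1), c j * (1+x)^(j+(k+1)))
        = fun x => ∑ j ∈ range (n+1), (c j * ((j:ℝ)+k+1)) * (1+x)^(j+k) := by
      funext x
      have hterm : ∀ j ∈ range (n+1), HasDerivAt (fun x : ℝ => c j * (1+x)^(j+(k+1)))
          ((c j * ((j:ℝ)+k+1)) * (1+x)^(j+k)) x := by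
        intro j _
        have h1 : HasDerivAt (fun x : ℝ => (1+x)) 1 x := (hasDerivAt_id x).const_add 1
        have h2 : HasDerivAt (fun y : ℝ => c j * (1 + y) ^ (j + (k + 1)))
            (c j * (((j + (k + 1) : ℕ) : ℝ) * (1 + x) ^ (j + (k + 1) - 1) * 1)) x :=
          (h1.fun_pow (j+(k+1))).const_mul (c j)
        convert h2 using 1
        have h3 : j + (k+1) - 1 = j + k := by omega
        rw [h3]; push_cast; ring
      exact (HasDerivAt.fun_sum hterm).deriv
    rw [hderiv, ih n (fun j => c j * ((j:ℝ)+k+1))]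
    funext x
    refine Finset.sum_congr rfl fun j _ => ?_
    rw [show j + (k+1) = (j+k) + 1 from rfl, Nat.factorial_succ]
    push_cast
    ring

theorem stmt9 (k : ℕ) (ρ : ℝ) (hρ : 0 < ρ) (hk : (k : ℝ) - 1 < ρ ∧ ρ < k) (n : ℕ)
    (x : ℝ) (hx : x ∈ Set.Ioc (-1 : ℝ) 1) :
    rlD k ρ (-1) (fun y => (1 + y) ^ ρ * jacobiP n (-ρ) ρ y) x
      = Real.Gamma (n + ρ + 1) / (n.factorial : ℝ) * legendreP n x := by
  obtain ⟨hk1, hk2⟩ := hk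
  obtain ⟨hx1, hx2⟩ := hx
  have hσ : 0 < (k:ℝ) - ρ := by linarith
  set A : ℕ → ℝ := fun j => (1 / (n.factorial:ℝ)) * ((-1:ℝ)^(n-j) * (n.choose j) *
    (∏ t ∈ Finset.range (n-j), (ρ + (j:ℝ) + 1 + t)) *
    (∏ t ∈ Finset.range j, (-ρ + ρ + (n:ℝ) + 1 + t))) with hA
  set c : ℕ → ℝ := fun j => A j / 2^j * Real.Gamma (ρ+(j:ℝ)+1) / ((j+k).factorial : ℝ) with hc
  -- Step 2: the fractional integral is a polynomial on Ioi (-1)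
  have hfrac : Set.EqOn (fracInt (-1) ((k:ℝ) - ρ) (fun y => (1 + y) ^ ρ * jacobiP n (-ρ) ρ y))
      (fun x' => ∑ j ∈ range (n+1), c j * (1+x')^(j+k)) (Set.Ioi (-1:ℝ)) := by
    intro x' hx'
    have hx'1 : -1 < x' := hx'
    unfold fracInt
    have hintegrand : Set.EqOn
        (fun y => (1 + y) ^ ρ * jacobiP n (-ρ) ρ y * (x' - y) ^ ((k:ℝ) - ρ - 1))
        (fun y => ∑ j ∈ range (n+1), (A j / 2^j) * ((1+y)^(ρ+(j:ℝ)) * (x'-y)^((k:ℝ)-ρ-1)))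
        (Set.uIcc (-1) x') := by
      intro y hy
      rw [Set.uIcc_of_le (by linarith : (-1:ℝ) ≤ x')] at hy
      have hy1 : 0 ≤ 1 + y := by have := hy.1; linarith
      simp only
      rw [jacobi_flip n (-ρ) ρ y, Finset.mul_sum, Finset.mul_sum, Finset.sum_mul]
      refine Finset.sum_congr rfl fun j _ => ?_
      have hpow : (1 + y) ^ ρ * ((y + 1)/2) ^ j = (1+y)^(ρ+(j:ℝ)) / 2^j := by
        rw [Real.rpow_add_of_nonneg hy1 hρ.le (by positivity),
          Real.rpow_natCast, show y + 1 = 1 + y by ring, div_pow]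
        ring
      rw [hA]
      linear_combination ((1 / (n.factorial:ℝ)) * ((-1:ℝ)^(n-j) * (n.choose j) *
        (∏ t ∈ Finset.range (n-j), (ρ + (j:ℝ) + 1 + t)) *
        (∏ t ∈ Finset.range j, (-ρ + ρ + (n:ℝ) + 1 + t))) * (x'-y)^((k:ℝ)-ρ-1)) * hpow
    rw [intervalIntegral.integral_congr hintegrand]
    have hswap := intervalIntegral.integral_finset_sum (μ := volume) (a := (-1:ℝ)) (b := x')
      (s := range (n+1))
      (f := fun j y => A j / 2^j * ((1+y)^(ρ+(j:ℝ)) * (x'-y)^((k:ℝ)-ρ-1)))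
      (fun j _ => (integrable_term hx'1 hσ
        (by linarith [Nat.cast_nonneg (α := ℝ) j] : (0:ℝ) ≤ ρ+(j:ℝ))).const_mul _)
    rw [hswap, Finset.mul_sum]
    refine Finset.sum_congr rfl fun j _ => ?_
    rw [intervalIntegral.integral_const_mul,
      beta_shift hx'1 (by linarith [Nat.cast_nonneg (α := ℝ) j]) hσ]
    have e1 : ρ + (j:ℝ) + ((k:ℝ) - ρ) = ((j+k : ℕ) : ℝ) := by push_cast; ring
    rw [e1, Real.rpow_natCast, Real.Gamma_nat_eq_factorial]
    have hΓσ : Real.Gamma ((k:ℝ) - ρ) ≠ 0 := (Real.Gamma_pos_of_pos hσ).ne'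
    rw [hc]
    field_simp
  -- Step 3: differentiate
  have hmem : Set.Ioi (-1:ℝ) ∈ nhds x := isOpen_Ioi.mem_nhds hx1
  have heq : rlD k ρ (-1) (fun y => (1 + y) ^ ρ * jacobiP n (-ρ) ρ y) x
      = iteratedDeriv k (fun x' => ∑ j ∈ range (n+1), c j * (1+x')^(j+k)) x := by
    unfold rlD
    exact Filter.EventuallyEq.iteratedDeriv_eq k (Filter.eventuallyEq_of_mem hmem hfrac)
  rw [heq, iter_deriv_poly k n c]
  -- Step 4: compare with Legendre
  rw [legendreP, jacobi_flip n 0 0 x, Finset.mul_sum, Finset.mul_sum]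
  refine Finset.sum_congr rfl fun j hj => ?_
  have hjn : j ≤ n := Nat.lt_succ_iff.mp (mem_range.mp hj)
  have hG : Real.Gamma (ρ+(j:ℝ)+1) * ∏ t ∈ range (n-j), (ρ + (j:ℝ) + 1 + t)
      = Real.Gamma ((n:ℝ) + ρ + 1) := by
    rw [gamma_prod (by linarith [Nat.cast_nonneg (α := ℝ) j] : (0:ℝ) < ρ+(j:ℝ)+1) (n-j)]
    congr 1
    rw [Nat.cast_sub hjn]
    ring
  have hQ : (j.factorial : ℝ) * ∏ t ∈ range (n-j), ((j:ℝ) + 1 + t) = (n.factorial : ℝ) := by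
    rw [fact_prod j (n-j), Nat.add_sub_cancel' hjn]
  have hleg1 : ∏ t ∈ range (n-j), ((0:ℝ) + (j:ℝ) + 1 + t) = ∏ t ∈ range (n-j), ((j:ℝ) + 1 + t) :=
    Finset.prod_congr rfl fun t _ => by ring
  have hleg2 : ∏ t ∈ range j, ((0:ℝ) + 0 + (n:ℝ) + 1 + t) = ∏ t ∈ range j, (-ρ + ρ + (n:ℝ) + 1 + t) :=
    Finset.prod_congr rfl fun t _ => by ring
  rw [hleg1, hleg2]
  rw [hc, hA]
  have hfj : (j.factorial : ℝ) ≠ 0 := by exact_mod_cast j.factorial_ne_zero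
  have hfn : (n.factorial : ℝ) ≠ 0 := by exact_mod_cast n.factorial_ne_zero
  have hfjk : ((j+k).factorial : ℝ) ≠ 0 := by exact_mod_cast (j+k).factorial_ne_zero
  have h2j : (2:ℝ)^j ≠ 0 := by positivity
  rw [← hG, ← hQ]
  have hxp : ((x+1)/2)^j = (1+x)^j / 2^j := by
    rw [div_pow]; ring_nf
  rw [hxp]
  field_simp
end

section
/- Let μ ∈ (k-1,k) with k ∈ {1,2}, and define the modified Riemann–Liouville operator ᴿD̂₋^μ u(x) = (1+x)^μ (ᴿD₋^μ u)(x). Then for any polynomial f of degree ≤ N with f(-1) = 0, the equation ᴿD̂₋^μ u = f with u(-1) = 0 has a unique polynomial solution u of degree ≤ N, given explicitly by u(x) = I₋^μ { (1+x)^{-μ} f(x) }. -/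
open Real Filter Set

/-- Modified Riemann–Liouville fractional derivative `ᴿD̂₋^μ u(x) = (1+x)^μ ᴿD₋^μ u(x)`. -/
noncomputable def rlDHat (k : ℕ) (μ : ℝ) (u : ℝ → ℝ) (x : ℝ) : ℝ :=
  (1 + x) ^ μ * rlD k μ (-1) u x

open intervalIntegral MeasureTheory Polynomial

lemma betaReal {s t : ℝ} (hs : 0 < s) (ht : 0 < t) :
    ∫ τ in (0:ℝ)..1, τ ^ (s-1) * (1-τ) ^ (t-1)
      = Real.Gamma s * Real.Gamma t / Real.Gamma (s+t) := by
  have h := Complex.Gamma_mul_Gamma_eq_betaIntegral (s := (s:ℂ)) (t := (t:ℂ))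
    (by simpa using hs) (by simpa using ht)
  have h2 : Complex.betaIntegral (s:ℂ) (t:ℂ)
      = ((∫ τ in (0:ℝ)..1, τ ^ (s-1) * (1-τ) ^ (t-1) : ℝ) : ℂ) := by
    rw [Complex.betaIntegral]
    rw [show ((∫ τ in (0:ℝ)..1, τ ^ (s-1) * (1-τ) ^ (t-1) : ℝ) : ℂ)
        = ∫ τ in (0:ℝ)..1, ((τ ^ (s-1) * (1-τ) ^ (t-1) : ℝ) : ℂ) from
      (RCLike.intervalIntegral_ofReal (𝕜 := ℂ)).symm]
    apply intervalIntegral.integral_congr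
    intro x hx
    rw [Set.uIcc_of_le (by norm_num : (0:ℝ) ≤ 1)] at hx
    simp only []
    rw [show ((s:ℂ) - 1) = ((s-1 : ℝ) : ℂ) by push_cast; ring,
      show ((t:ℂ) - 1) = ((t-1 : ℝ) : ℂ) by push_cast; ring,
      show ((1:ℂ) - (x:ℂ)) = ((1 - x : ℝ) : ℂ) from by push_cast; ring]
    rw [← Complex.ofReal_cpow hx.1, ← Complex.ofReal_cpow (by linarith [hx.2] : (0:ℝ) ≤ 1 - x)]
    push_cast
    ring
  rw [h2, ← Complex.ofReal_add, Complex.Gamma_ofReal, Complex.Gamma_ofReal,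
    Complex.Gamma_ofReal, ← Complex.ofReal_mul, ← Complex.ofReal_mul] at h
  have h3 : Real.Gamma s * Real.Gamma t
      = Real.Gamma (s+t) * ∫ τ in (0:ℝ)..1, τ ^ (s-1) * (1-τ) ^ (t-1) := by
    exact_mod_cast h
  have hΓ : Real.Gamma (s+t) ≠ 0 := (Real.Gamma_pos_of_pos (by linarith)).ne'
  field_simp [hΓ]
  linarith [h3]

lemma ii_left (s t x : ℝ) (hs : -1 < s) (hx : -1 < x) {m : ℝ} (hm1 : -1 ≤ m) (hmx : m < x) :
    IntervalIntegrable (fun y => (1+y)^s * (x-y)^t) volume (-1) m := by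
  have h1 : IntervalIntegrable (fun y => (1+y)^s) volume (-1) m := by
    have := (intervalIntegral.intervalIntegrable_rpow' (a := 0) (b := m + 1) hs).comp_sub_right (-1)
    simpa [sub_neg_eq_add, add_comm] using this
  apply h1.mul_continuousOn
  apply ContinuousOn.rpow_const (by fun_prop)
  intro y hy
  rw [Set.uIcc_of_le (by linarith)] at hy
  exact Or.inl (by nlinarith [hy.2] : x - y ≠ 0)

lemma ii_right (s t x : ℝ) (ht : -1 < t) (hx : -1 < x) {m : ℝ} (hm1 : -1 < m) (hmx : m ≤ x) :
    IntervalIntegrable (fun y => (1+y)^s * (x-y)^t) volume m x := by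
  have h1 : IntervalIntegrable (fun y => (x-y)^t) volume m x := by
    have := (intervalIntegral.intervalIntegrable_rpow' (a := x - m) (b := 0) ht).comp_sub_left x
    simpa using this
  apply h1.continuousOn_mul
  apply ContinuousOn.rpow_const (by fun_prop)
  intro y hy
  rw [Set.uIcc_of_le (by linarith)] at hy
  exact Or.inl (by nlinarith [hy.1] : (1:ℝ) + y ≠ 0)

lemma ii_pow_mul {s t x : ℝ} (hs : -1 < s) (ht : -1 < t) (hx : -1 < x) :
    IntervalIntegrable (fun y => (1+y)^s * (x-y)^t) volume (-1) x := by
  set m := (-1 + x)/2 with hm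
  have hm1 : -1 < m := by simp only [hm]; linarith
  have hmx : m < x := by simp only [hm]; linarith
  exact (ii_left s t x hs hx hm1.le hmx).trans (ii_right s t x ht hx hm1 hmx.le)

lemma integral_pow_mul {s ρ x : ℝ} (hs : -1 < s) (hρ : 0 < ρ) (hx : -1 < x) :
    ∫ y in (-1:ℝ)..x, (1+y)^s * (x-y)^(ρ-1)
      = Real.Gamma (s+1) * Real.Gamma ρ / Real.Gamma (s+1+ρ) * (1+x)^(s+ρ) := by
  have hc : (0:ℝ) < 1 + x := by linarith
  have step1 : ∫ y in (-1:ℝ)..x, (1+y)^s * (x-y)^(ρ-1)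
      = ∫ t in (0:ℝ)..(1+x), t^s * ((1+x)-t)^(ρ-1) := by
    have h := intervalIntegral.integral_comp_sub_right
      (a := (0:ℝ)) (b := 1+x) (fun y => (1+y)^s * (x-y)^(ρ-1)) 1
    have h2 : (fun t : ℝ => (1+(t-1))^s * (x-(t-1))^(ρ-1))
        = fun t => t^s * ((1+x)-t)^(ρ-1) := by
      funext t
      rw [show 1+(t-1) = t by ring, show x-(t-1) = (1+x)-t by ring]
    rw [h2] at h
    rw [h]
    norm_num
  have step2 : ∫ t in (0:ℝ)..(1+x), t^s * ((1+x)-t)^(ρ-1)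
      = (1+x) • ∫ τ in (0:ℝ)..1, ((1+x)*τ)^s * ((1+x)-(1+x)*τ)^(ρ-1) := by
    have h := intervalIntegral.integral_comp_mul_left (a := (0:ℝ)) (b := 1)
      (fun t => t^s * ((1+x)-t)^(ρ-1)) hc.ne'
    rw [h, mul_zero, mul_one, smul_smul, mul_inv_cancel₀ hc.ne', one_smul]
  have step3 : ∫ τ in (0:ℝ)..1, ((1+x)*τ)^s * ((1+x)-(1+x)*τ)^(ρ-1)
      = (1+x)^(s+ρ-1) * ∫ τ in (0:ℝ)..1, τ^s * (1-τ)^(ρ-1) := by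
    rw [← intervalIntegral.integral_const_mul]
    apply intervalIntegral.integral_congr
    intro τ hτ
    rw [Set.uIcc_of_le (by norm_num : (0:ℝ) ≤ 1)] at hτ
    simp only []
    rw [show (1+x) - (1+x)*τ = (1+x)*(1-τ) by ring,
      Real.mul_rpow hc.le hτ.1, Real.mul_rpow hc.le (by linarith [hτ.2]),
      show s + ρ - 1 = s + (ρ-1) by ring, Real.rpow_add hc]
    ring
  have step4 : ∫ τ in (0:ℝ)..1, τ^s * (1-τ)^(ρ-1)
      = Real.Gamma (s+1) * Real.Gamma ρ / Real.Gamma (s+1+ρ) := by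
    have := betaReal (s := s+1) (t := ρ) (by linarith) hρ
    simpa using this
  rw [step1, step2, step3, step4, smul_eq_mul]
  rw [show s + ρ = 1 + (s + ρ - 1) by ring, Real.rpow_add hc, Real.rpow_one]
  ring

lemma poly_repr (p : Polynomial ℝ) {M : ℕ} (hM : p.natDegree ≤ M) (y : ℝ) :
    p.eval y = ∑ n ∈ Finset.range (M+1),
      (p.comp (X - C 1)).coeff n * (1+y)^((n:ℝ)) := by
  set q := p.comp (X - C 1) with hq
  have hqd : q.natDegree ≤ M := by
    rw [hq, Polynomial.natDegree_comp, natDegree_X_sub_C, mul_one]; exact hM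
  have h1 : p.eval y = q.eval (1+y) := by
    rw [hq, Polynomial.eval_comp]; simp
  rw [h1, Polynomial.eval_eq_sum_range' (Nat.lt_succ_of_le hqd)]
  exact Finset.sum_congr rfl fun n _ => by rw [Real.rpow_natCast]

lemma term_integrable {ρ x : ℝ} (hρ : 0 < ρ) (hx : -1 < x) (a s : ℝ)
    (h : a = 0 ∨ -1 < s) :
    IntervalIntegrable (fun y => a * (1+y)^s * (x-y)^(ρ-1)) volume (-1) x := by
  rcases h with h | h
  · simp only [h, zero_mul]
    exact intervalIntegrable_const
  · have := (ii_pow_mul h (by linarith : (-1:ℝ) < ρ - 1) hx).const_mul a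
    simpa [mul_assoc] using this

lemma integral_sum_pow (a s : ℕ → ℝ) (M : ℕ) {ρ x : ℝ} (hρ : 0 < ρ) (hx : -1 < x)
    (h : ∀ n ∈ Finset.range M, a n = 0 ∨ -1 < s n) :
    ∫ y in (-1:ℝ)..x, (∑ n ∈ Finset.range M, a n * (1+y)^(s n)) * (x-y)^(ρ-1)
      = ∑ n ∈ Finset.range M,
          a n * (Real.Gamma (s n + 1) * Real.Gamma ρ / Real.Gamma (s n + 1 + ρ))
            * (1+x)^(s n + ρ) := by
  have key : (fun y => (∑ n ∈ Finset.range M, a n * (1+y)^(s n)) * (x-y)^(ρ-1))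
      = fun y => ∑ n ∈ Finset.range M, a n * (1+y)^(s n) * (x-y)^(ρ-1) := by
    funext y; rw [Finset.sum_mul]
  rw [key, intervalIntegral.integral_finset_sum
    (fun n hn => term_integrable hρ hx (a n) (s n) (h n hn))]
  refine Finset.sum_congr rfl fun n hn => ?_
  rcases h n hn with h0 | h0
  · simp [h0]
  · simp_rw [mul_assoc, intervalIntegral.integral_const_mul]
    rw [integral_pow_mul h0 hρ hx]

lemma hasDerivAt_onePow (r y : ℝ) (hy : -1 < y) :
    HasDerivAt (fun z => (1+z)^r) (r * (1+y)^(r-1)) y := by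
  have h : HasDerivAt (fun z : ℝ => 1+z) 1 y := (hasDerivAt_id y).const_add 1
  have := h.rpow_const (p := r) (Or.inl (by linarith : (1:ℝ)+y ≠ 0))
  simpa using this

lemma hasDerivAt_sum_pow (M : ℕ) (c r : ℕ → ℝ) (y : ℝ) (hy : -1 < y) :
    HasDerivAt (fun z => ∑ n ∈ Finset.range M, c n * (1+z)^(r n))
      (∑ n ∈ Finset.range M, (c n * r n) * (1+y)^(r n - 1)) y := by
  have : ∀ n ∈ Finset.range M,
      HasDerivAt (fun z => c n * (1+z)^(r n)) ((c n * r n) * (1+y)^(r n - 1)) y := by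
    intro n _
    have := (hasDerivAt_onePow (r n) y hy).const_mul (c n)
    simpa [mul_assoc] using this
  simpa using HasDerivAt.fun_sum this

lemma deriv_sum_pow (M : ℕ) (c r : ℕ → ℝ) {y : ℝ} (hy : -1 < y) :
    deriv (fun z => ∑ n ∈ Finset.range M, c n * (1+z)^(r n)) y
      = ∑ n ∈ Finset.range M, (c n * r n) * (1+y)^(r n - 1) :=
  (hasDerivAt_sum_pow M c r y hy).deriv

lemma deriv_eqOn' {F G : ℝ → ℝ} (hFG : Set.EqOn F G (Set.Ioi (-1:ℝ))) {y : ℝ} (hy : -1 < y) :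
    deriv F y = deriv G y :=
  (Filter.eventuallyEq_of_mem (isOpen_Ioi.mem_nhds hy) hFG).deriv_eq

lemma mu_ne (k : ℕ) (hk : k = 1 ∨ k = 2) (μ : ℝ) (hμ1 : (k:ℝ)-1 < μ) (hμ2 : μ < k) :
    ∀ n : ℕ, (n:ℝ) + 1 - μ ≠ 0 := by
  intro n h
  have hμ : μ = (n:ℝ) + 1 := by linarith
  rcases hk with rfl | rfl
  · rw [hμ] at hμ2
    have : (n:ℝ) < 0 := by push_cast at hμ2; linarith
    exact absurd this (not_lt.mpr (Nat.cast_nonneg (α := ℝ) n))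
  · rw [hμ] at hμ1 hμ2
    have h1 : (0:ℝ) < (n:ℝ) := by push_cast at hμ1; linarith
    have h2 : (n:ℝ) < 1 := by push_cast at hμ2; linarith
    have : (0:ℕ) < n := by exact_mod_cast h1
    have : n < 1 := by exact_mod_cast h2
    omega

lemma gamma_ne (k : ℕ) (hk : k = 1 ∨ k = 2) (μ : ℝ) (hμ1 : (k:ℝ)-1 < μ) (hμ2 : μ < k) :
    ∀ n : ℕ, Real.Gamma ((n:ℝ) + 1 - μ) ≠ 0 := by
  intro n
  apply Real.Gamma_ne_zero
  intro m h
  have hμ : μ = (n:ℝ) + 1 + m := by linarith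
  have hge : (1:ℝ) ≤ (n:ℝ) + 1 + m := by
    have := Nat.cast_nonneg (α := ℝ) n; have := Nat.cast_nonneg (α := ℝ) m; linarith
  rcases hk with rfl | rfl
  · rw [hμ] at hμ2; push_cast at hμ2; linarith
  · push_cast at hμ1 hμ2
    rw [hμ] at hμ1 hμ2
    have h1 : (0:ℝ) < (n:ℝ) + m := by linarith
    have h2 : (n:ℝ) + (m:ℝ) < 1 := by linarith
    have h3 : (0:ℕ) < n + m := by exact_mod_cast (by push_cast; linarith : (0:ℝ) < ((n+m:ℕ):ℝ))
    have h4 : n + m < 1 := by exact_mod_cast (by push_cast; linarith : ((n+m:ℕ):ℝ) < 1)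
    omega

lemma engine (k : ℕ) (hk : k = 1 ∨ k = 2) (μ : ℝ) (hμ1 : (k:ℝ)-1 < μ) (hμ2 : μ < (k:ℝ))
    (p : Polynomial ℝ) (M : ℕ) (hM : p.natDegree ≤ M) {x : ℝ} (hx : -1 < x) :
    rlDHat k μ (fun y => p.eval y) x
      = ∑ n ∈ Finset.range (M+1),
          (p.comp (X - C 1)).coeff n * (Real.Gamma ((n:ℝ)+1) / Real.Gamma ((n:ℝ)+1-μ))
            * (1+x)^((n:ℝ)) := by
  have hc : (0:ℝ) < 1 + x := by linarith
  have hρ : (0:ℝ) < (k:ℝ) - μ := by linarith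
  have hμne := mu_ne k hk μ hμ1 hμ2
  have hΓne := gamma_ne k hk μ hμ1 hμ2
  set b : ℕ → ℝ := fun n => (p.comp (X - C 1)).coeff n with hb
  set C0 : ℕ → ℝ := fun n =>
    b n * (Real.Gamma ((n:ℝ)+1) / Real.Gamma ((n:ℝ)+1+((k:ℝ)-μ))) with hC0
  set R0 : ℕ → ℝ := fun n => (n:ℝ) + ((k:ℝ)-μ) with hR0
  have stepA : Set.EqOn (fracInt (-1) ((k:ℝ)-μ) (fun t => p.eval t))
      (fun y => ∑ n ∈ Finset.range (M+1), C0 n * (1+y)^(R0 n))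
      (Set.Ioi (-1:ℝ)) := by
    intro y hy
    rw [Set.mem_Ioi] at hy
    simp only [fracInt]
    have hint : (fun t => p.eval t * (y - t)^(((k:ℝ)-μ)-1))
        = fun t => (∑ n ∈ Finset.range (M+1), b n * (1+t)^((n:ℝ))) * (y-t)^(((k:ℝ)-μ)-1) := by
      funext t; rw [poly_repr p hM t]
    rw [hint, integral_sum_pow b (fun n => (n:ℝ)) (M+1) hρ hy
      (fun n _ => Or.inr (by
        have := Nat.cast_nonneg (α := ℝ) n; linarith))]
    rw [Finset.mul_sum]
    refine Finset.sum_congr rfl fun n hn => ?_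
    have hΓρ : Real.Gamma ((k:ℝ)-μ) ≠ 0 := (Real.Gamma_pos_of_pos hρ).ne'
    simp only [hC0, hR0]
    field_simp
  have hΓ1 : ∀ n : ℕ, Real.Gamma ((n:ℝ)+1+(1-μ)) = ((n:ℝ)+1-μ) * Real.Gamma ((n:ℝ)+1-μ) := by
    intro n
    rw [show (n:ℝ)+1+(1-μ) = ((n:ℝ)+1-μ)+1 by ring]
    exact Real.Gamma_add_one (hμne n)
  rcases hk with rfl | rfl
  · -- k = 1
    rw [rlDHat, rlD]
    rw [iteratedDeriv_one]
    rw [deriv_eqOn' stepA hx, deriv_sum_pow _ _ _ hx, Finset.mul_sum]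
    refine Finset.sum_congr rfl fun n hn => ?_
    have hpow : (1+x)^μ * (1+x)^((n:ℝ)-μ) = (1+x)^((n:ℝ)) := by
      rw [← Real.rpow_add hc]; ring_nf
    simp only [hC0, hR0, hb]
    push_cast
    rw [show (n:ℝ) + (1-μ) - 1 = (n:ℝ) - μ by ring, hΓ1 n, ← hpow]
    field_simp [hμne n, hΓne n]
    ring
  · -- k = 2
    rw [rlDHat, rlD]
    rw [show (2:ℕ) = 1 + 1 from rfl, iteratedDeriv_succ, iteratedDeriv_one]
    have hEq1 : Set.EqOn (deriv (fracInt (-1) (((1+1:ℕ):ℝ)-μ) (fun t => p.eval t)))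
        (fun y => ∑ n ∈ Finset.range (M+1), (C0 n * R0 n) * (1+y)^(R0 n - 1))
        (Set.Ioi (-1:ℝ)) := by
      intro y hy
      rw [Set.mem_Ioi] at hy
      exact (deriv_eqOn' stepA hy).trans (deriv_sum_pow _ _ _ hy)
    rw [deriv_eqOn' hEq1 hx, deriv_sum_pow _ _ _ hx, Finset.mul_sum]
    refine Finset.sum_congr rfl fun n hn => ?_
    have hne2 : (n:ℝ) + 2 - μ ≠ 0 := by
      have := hμne (n+1); push_cast at this; intro h; exact this (by linarith)
    have hΓ2 : Real.Gamma ((n:ℝ)+1+(2-μ))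
        = ((n:ℝ)+2-μ) * (((n:ℝ)+1-μ) * Real.Gamma ((n:ℝ)+1-μ)) := by
      have e1 := Real.Gamma_add_one (show ((n:ℝ)+1-μ)+1 ≠ 0 by
        intro h; exact hne2 (by linarith))
      have e2 := Real.Gamma_add_one (hμne n)
      rw [show (n:ℝ)+1+(2-μ) = (((n:ℝ)+1-μ)+1)+1 by ring, e1, e2,
        show ((n:ℝ)+1-μ)+1 = (n:ℝ)+2-μ by ring]
    have hpow : (1+x)^μ * (1+x)^((n:ℝ)-μ) = (1+x)^((n:ℝ)) := by
      rw [← Real.rpow_add hc]; ring_nf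
    simp only [hC0, hR0, hb]
    push_cast
    rw [show (n:ℝ) + (2-μ) - 1 - 1 = (n:ℝ) - μ by ring, hΓ2, ← hpow]
    field_simp [hμne n, hΓne n, hne2]
    ring

lemma fracint_repr (k : ℕ) (hk : k = 1 ∨ k = 2) (μ : ℝ) (hμ1 : (k:ℝ)-1 < μ) (hμ2 : μ < k)
    (p : Polynomial ℝ) (hp : p.eval (-1) = 0) (M : ℕ) (hM : p.natDegree ≤ M)
    {x : ℝ} (hx : -1 < x) :
    fracInt (-1) μ (fun y => (1+y)^(-μ) * p.eval y) x
      = ∑ n ∈ Finset.range (M+1),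
          (p.comp (X - C 1)).coeff n * (Real.Gamma ((n:ℝ)+1-μ) / Real.Gamma ((n:ℝ)+1))
            * (1+x)^((n:ℝ)) := by
  have hμpos : 0 < μ := by
    rcases hk with rfl | rfl <;> push_cast at hμ1 hμ2 <;> linarith
  have hμlt2 : μ < 2 := by
    rcases hk with rfl | rfl <;> push_cast at hμ1 hμ2 <;> linarith
  have hμne := mu_ne k hk μ hμ1 hμ2
  set b : ℕ → ℝ := fun n => (p.comp (X - C 1)).coeff n with hb
  have hb0 : b 0 = 0 := by
    simp only [hb, Polynomial.coeff_zero_eq_eval_zero, Polynomial.eval_comp]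
    simpa using hp
  have hμn : ∀ n : ℕ, (n:ℝ) - μ ≠ 0 := by
    intro n
    cases n with
    | zero => simpa using (by linarith : -μ ≠ 0)
    | succ m =>
      have := hμne m; push_cast; push_cast at this
      intro h; exact this (by linarith)
  have hcong : Set.EqOn (fun y => ((1+y)^(-μ) * p.eval y) * (x-y)^(μ-1))
      (fun y => (∑ n ∈ Finset.range (M+1), b n * (1+y)^((n:ℝ)-μ)) * (x-y)^(μ-1))
      (Set.uIcc (-1:ℝ) x) := by
    intro y hy
    rw [Set.uIcc_of_le (by linarith : (-1:ℝ) ≤ x)] at hy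
    simp only []
    congr 1
    rcases eq_or_lt_of_le hy.1 with heq | hlt
    · rw [← heq, show (1:ℝ)+(-1) = 0 by ring,
        Real.zero_rpow (by linarith : -μ ≠ 0), zero_mul]
      symm
      apply Finset.sum_eq_zero
      intro n _
      rw [Real.zero_rpow (hμn n), mul_zero]
    · have h1y : (0:ℝ) < 1 + y := by linarith
      rw [poly_repr p hM y, Finset.mul_sum]
      apply Finset.sum_congr rfl
      intro n _
      rw [show (n:ℝ)-μ = -μ + (n:ℝ) by ring, Real.rpow_add h1y]
      ring
  simp only [fracInt]
  rw [intervalIntegral.integral_congr hcong]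
  rw [integral_sum_pow b (fun n => (n:ℝ)-μ) (M+1) hμpos hx (by
    intro n _
    cases n with
    | zero => exact Or.inl hb0
    | succ m =>
      exact Or.inr (by
        show (-1:ℝ) < ((m+1:ℕ):ℝ) - μ
        push_cast
        linarith [Nat.cast_nonneg (α := ℝ) m]))]
  rw [Finset.mul_sum]
  refine Finset.sum_congr rfl fun n hn => ?_
  have hΓμ : Real.Gamma μ ≠ 0 := (Real.Gamma_pos_of_pos hμpos).ne'
  have hΓn : Real.Gamma ((n:ℝ)+1) ≠ 0 :=
    (Real.Gamma_pos_of_pos (by linarith [Nat.cast_nonneg (α := ℝ) n] : (0:ℝ) < (n:ℝ)+1)).ne'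
  rw [show (n:ℝ)-μ+1 = (n:ℝ)+1-μ by ring, show (n:ℝ)+1-μ+μ = (n:ℝ)+1 by ring,
    show (n:ℝ)-μ+μ = (n:ℝ) by ring]
  simp only [hb]
  field_simp

lemma poly_eq_of_eqOn {P Q : Polynomial ℝ}
    (h : ∀ x ∈ Set.Ioo (-1:ℝ) 1, P.eval x = Q.eval x) : P = Q := by
  have h0 : P - Q = 0 := by
    apply Polynomial.eq_zero_of_infinite_isRoot
    refine (Set.Ioo_infinite (by norm_num : (-1:ℝ) < 1)).mono ?_
    intro x hx
    simp only [Set.mem_setOf_eq, Polynomial.IsRoot, Polynomial.eval_sub, sub_eq_zero]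
    exact h x hx
  exact sub_eq_zero.mp h0

/-- comp of a finset sum distributes -/
lemma sum_comp' {ι : Type*} (s : Finset ι) (g : ι → Polynomial ℝ) (r : Polynomial ℝ) :
    (∑ i ∈ s, g i).comp r = ∑ i ∈ s, (g i).comp r :=
  map_sum (Polynomial.compRingHom r) g s

lemma comb_comp (d : ℕ → ℝ) (N : ℕ) :
    (∑ n ∈ Finset.range (N+1), C (d n) * (X + C 1)^n).comp (X - C 1)
      = ∑ n ∈ Finset.range (N+1), C (d n) * X^n := by
  rw [sum_comp']
  refine Finset.sum_congr rfl fun n _ => ?_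
  simp [Polynomial.mul_comp, Polynomial.pow_comp, Polynomial.add_comp]

lemma comb_coeff (d : ℕ → ℝ) (N n : ℕ) (hn : n ≤ N) :
    (∑ n ∈ Finset.range (N+1), C (d n) * X^n).coeff n = d n := by
  rw [Polynomial.finset_sum_coeff]
  rw [Finset.sum_eq_single n]
  · simp
  · intro j _ hj
    simp [Polynomial.coeff_C_mul, Polynomial.coeff_X_pow, Ne.symm hj]
  · intro hmem
    exact absurd (Finset.mem_range.mpr (Nat.lt_succ_of_le hn)) hmem

lemma comb_deg (d : ℕ → ℝ) (N : ℕ) :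
    (∑ n ∈ Finset.range (N+1), C (d n) * (X + C 1)^n).natDegree ≤ N := by
  apply Polynomial.natDegree_sum_le_of_forall_le
  intro n hn
  refine le_trans (Polynomial.natDegree_mul_le) ?_
  have h1 : ((X + C (1:ℝ))^n).natDegree ≤ n := by
    refine le_trans (Polynomial.natDegree_pow_le) ?_
    rw [Polynomial.natDegree_X_add_C, mul_one]
  simp only [Polynomial.natDegree_C, zero_add]
  exact le_trans h1 (Nat.lt_succ_iff.mp (Finset.mem_range.mp hn))

lemma comb_eval (d : ℕ → ℝ) (N : ℕ) (x : ℝ) (hx : -1 < x) :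
    (∑ n ∈ Finset.range (N+1), C (d n) * (X + C 1)^n).eval x
      = ∑ n ∈ Finset.range (N+1), d n * (1+x)^((n:ℝ)) := by
  rw [Polynomial.eval_finset_sum]
  refine Finset.sum_congr rfl fun n _ => ?_
  rw [Real.rpow_natCast]
  simp [add_comm]

theorem stmt14 (k N : ℕ) (hk : k = 1 ∨ k = 2) (μ : ℝ) (hμ : (k : ℝ) - 1 < μ ∧ μ < k)
    (f : Polynomial ℝ) (hf : f.natDegree ≤ N) (hf0 : f.eval (-1) = 0) :
    ∃ u : Polynomial ℝ,
      (u.natDegree ≤ N ∧ u.eval (-1) = 0 ∧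
        (∀ x ∈ Set.Ioo (-1 : ℝ) 1, rlDHat k μ (fun y => u.eval y) x = f.eval x) ∧
        (∀ x ∈ Set.Ioo (-1 : ℝ) 1,
          u.eval x = fracInt (-1) μ (fun y => (1 + y) ^ (-μ) * f.eval y) x)) ∧
      (∀ v : Polynomial ℝ, v.natDegree ≤ N → v.eval (-1) = 0 →
        (∀ x ∈ Set.Ioo (-1 : ℝ) 1, rlDHat k μ (fun y => v.eval y) x = f.eval x) → v = u) := by
  obtain ⟨hμ1, hμ2⟩ := hμ
  have hμne := mu_ne k hk μ hμ1 hμ2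
  have hΓne := gamma_ne k hk μ hμ1 hμ2
  have hΓpos : ∀ n : ℕ, Real.Gamma ((n:ℝ)+1) ≠ 0 := fun n =>
    (Real.Gamma_pos_of_pos (by linarith [Nat.cast_nonneg (α := ℝ) n] : (0:ℝ) < (n:ℝ)+1)).ne'
  set b : ℕ → ℝ := fun n => (f.comp (X - C 1)).coeff n with hb
  set c : ℕ → ℝ := fun n => Real.Gamma ((n:ℝ)+1-μ) / Real.Gamma ((n:ℝ)+1) * b n with hc
  set u : Polynomial ℝ := ∑ n ∈ Finset.range (N+1), C (c n) * (X + C 1)^n with hu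
  have hb0 : b 0 = 0 := by
    simp only [hb, Polynomial.coeff_zero_eq_eval_zero, Polynomial.eval_comp]
    simpa using hf0
  have hudeg : u.natDegree ≤ N := comb_deg c N
  have hucomp : u.comp (X - C 1) = ∑ n ∈ Finset.range (N+1), C (c n) * X^n := comb_comp c N
  have hucoeff : ∀ n ≤ N, (u.comp (X - C 1)).coeff n = c n := fun n hn => by
    rw [hucomp]; exact comb_coeff c N n hn
  have hueval : u.eval (-1) = 0 := by
    rw [hu, Polynomial.eval_finset_sum]
    apply Finset.sum_eq_zero
    intro n hn
    cases n with
    | zero => simp [hc, hb0]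
    | succ m => simp
  refine ⟨u, ⟨hudeg, hueval, ?_, ?_⟩, ?_⟩
  · -- rlDHat u = f on Ioo
    intro x hx
    rw [engine k hk μ hμ1 hμ2 u N hudeg hx.1]
    rw [poly_repr f hf x]
    refine Finset.sum_congr rfl fun n hn => ?_
    rw [hucoeff n (Nat.lt_succ_iff.mp (Finset.mem_range.mp hn))]
    rw [show c n * (Real.Gamma ((n:ℝ)+1) / Real.Gamma ((n:ℝ)+1-μ)) = (f.comp (X - C 1)).coeff n
      from by
        simp only [hc, hb]
        rw [show Real.Gamma ((n:ℝ)+1-μ) / Real.Gamma ((n:ℝ)+1) * (f.comp (X - C 1)).coeff n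
            * (Real.Gamma ((n:ℝ)+1) / Real.Gamma ((n:ℝ)+1-μ))
          = (f.comp (X - C 1)).coeff n * (Real.Gamma ((n:ℝ)+1) / Real.Gamma ((n:ℝ)+1))
            * (Real.Gamma ((n:ℝ)+1-μ) / Real.Gamma ((n:ℝ)+1-μ)) by ring,
          div_self (hΓne n), div_self (hΓpos n), mul_one, mul_one]]
  · -- u.eval x = fracInt ...
    intro x hx
    rw [fracint_repr k hk μ hμ1 hμ2 f hf0 N hf hx.1]
    rw [hu, comb_eval c N x hx.1]
    refine Finset.sum_congr rfl fun n hn => ?_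
    simp only [hc, hb]
    ring
  · -- uniqueness
    intro v hvdeg hveval hveq
    set bv : ℕ → ℝ := fun n => (v.comp (X - C 1)).coeff n with hbv
    set P : Polynomial ℝ := ∑ n ∈ Finset.range (N+1),
      C (bv n * (Real.Gamma ((n:ℝ)+1) / Real.Gamma ((n:ℝ)+1-μ))) * (X + C 1)^n with hP
    have hPf : P = f := by
      apply poly_eq_of_eqOn
      intro x hx
      rw [hP, comb_eval _ N x hx.1, ← engine k hk μ hμ1 hμ2 v N hvdeg hx.1]
      exact hveq x hx
    have hPcomp : P.comp (X - C 1) = ∑ n ∈ Finset.range (N+1),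
        C (bv n * (Real.Gamma ((n:ℝ)+1) / Real.Gamma ((n:ℝ)+1-μ))) * X^n := comb_comp _ N
    have hcoeffs : ∀ n ≤ N, bv n * (Real.Gamma ((n:ℝ)+1) / Real.Gamma ((n:ℝ)+1-μ)) = b n := by
      intro n hn
      have := congrArg (fun r => (r.comp (X - C 1)).coeff n) hPf
      simp only [hPcomp] at this
      rw [comb_coeff _ N n hn] at this
      exact this
    have hvu : v.comp (X - C 1) = u.comp (X - C 1) := by
      apply Polynomial.ext
      intro n
      rcases le_or_gt n N with hn | hn
      · rw [hucoeff n hn]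
        have h1 := hcoeffs n hn
        have h2 : bv n = c n := by
          simp only [hc]
          rw [← h1]
          rw [show Real.Gamma ((n:ℝ)+1-μ) / Real.Gamma ((n:ℝ)+1)
              * (bv n * (Real.Gamma ((n:ℝ)+1) / Real.Gamma ((n:ℝ)+1-μ)))
            = bv n * (Real.Gamma ((n:ℝ)+1) / Real.Gamma ((n:ℝ)+1))
              * (Real.Gamma ((n:ℝ)+1-μ) / Real.Gamma ((n:ℝ)+1-μ)) by ring,
            div_self (hΓne n), div_self (hΓpos n), mul_one, mul_one]
        rw [← h2]
      · have hd1 : (v.comp (X - C 1)).natDegree ≤ N := by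
          rw [Polynomial.natDegree_comp, natDegree_X_sub_C, mul_one]; exact hvdeg
        have hd2 : (u.comp (X - C 1)).natDegree ≤ N := by
          rw [Polynomial.natDegree_comp, natDegree_X_sub_C, mul_one]; exact hudeg
        rw [Polynomial.coeff_eq_zero_of_natDegree_lt (lt_of_le_of_lt hd1 hn),
          Polynomial.coeff_eq_zero_of_natDegree_lt (lt_of_le_of_lt hd2 hn)]
    have := congrArg (fun r => r.comp (X + C 1)) hvu
    simpa [Polynomial.comp_assoc, Polynomial.sub_comp, Polynomial.X_comp, Polynomial.C_comp,
      add_sub_cancel_right, Polynomial.comp_X] using this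
end
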